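/- Let G = ⊕_{n=1}^∞ ℤ. If {F_n} is a sequence of finite subsets of G such that ⋃_n F_n generates G as a group, then {F_n} does not satisfy the Besicovitch covering property. -/

import Mathlib

open Finset

/-- The group `ℤ^∞ = ⊕_{n=1}^∞ ℤ`, realized as finitely supported functions `ℕ →₀ ℤ`. -/
abbrev ZInf := ℕ →₀ ℤ

/-- The Besicovitch covering property for a sequence of finite subsets of `ℤ^∞`
(additive notation): there is `C` such that for every finite `A` and assignment
`g ↦ ν g`, some subfamily of the translates `F (ν g) + g` covers `A` with
multiplicity at most `C`. -/
def IsBesicovitch (F : ℕ → Finset ZInf) : Prop :=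
  ∃ C : ℕ, ∀ (A : Finset ZInf) (ν : ZInf → ℕ), ∃ A' ⊆ A,
    (∀ a ∈ A, ∃ g ∈ A', a ∈ (F (ν g)).image (· + g)) ∧
    ∀ h : ZInf, (A'.filter (fun g => h ∈ (F (ν g)).image (· + g))).card ≤ C

/-- If the union of the `F n` generates, every coordinate is hit by some element. -/
lemma zinf_eval_gen (F : ℕ → Finset ZInf)
    (hgen : AddSubgroup.closure (⋃ n, (F n : Set ZInf)) = ⊤) (m : ℕ) :
    ∃ n, ∃ f ∈ F n, f m ≠ 0 := by
  by_contra h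
  push_neg at h
  set K : AddSubgroup ZInf :=
    { carrier := {x | x m = 0}
      zero_mem' := by simp
      add_mem' := by
        intro a b ha hb
        simp only [Set.mem_setOf_eq, Finsupp.add_apply] at *
        omega
      neg_mem' := by
        intro a ha
        simp only [Set.mem_setOf_eq, Finsupp.neg_apply] at *
        omega } with hK
  have hle : AddSubgroup.closure (⋃ n, (F n : Set ZInf)) ≤ K := by
    rw [AddSubgroup.closure_le]
    rintro x hx
    simp only [Set.mem_iUnion, Finset.mem_coe] at hx
    obtain ⟨n, hn⟩ := hx
    exact h n x hn
  have h1 : Finsupp.single m (1:ℤ) ∈ K := hle (hgen.ge (AddSubgroup.mem_top _))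
  have : (Finsupp.single m (1:ℤ)) m = 0 := h1
  rw [Finsupp.single_eq_same] at this
  exact one_ne_zero this

/-- A support bound: values beyond the sup of the support vanish. -/
lemma zinf_apply_eq_zero_of_lt (x : ZInf) (k : ℕ) (h : x.support.sup id < k) : x k = 0 := by
  by_contra hk
  have : k ∈ x.support := Finsupp.mem_support_iff.mpr hk
  have := Finset.le_sup (f := id) this
  simp only [id] at this
  omega

/-- The descent lemma: inside a finite set `Gn`, starting from an element with nonzero
`M`-coordinate, we can find one such element which stays outside `Gn` after subtracting
any of the previously chosen `f j`. -/
lemma zinf_descent (Gn : Finset ZInf) (N M : ℕ) (f : ℕ → ZInf) (m : ℕ → ℕ)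
    (hfm : ∀ j < N, f j (m j) ≠ 0)
    (h0 : ∀ i < N, ∀ j < i, f j (m i) = 0)
    (hM : ∀ j < N, f j M = 0)
    (x₀ : ZInf) (hx₀ : x₀ ∈ Gn) (hx₀M : x₀ M ≠ 0) :
    ∃ x ∈ Gn, x M ≠ 0 ∧ ∀ j < N, x - f j ∉ Gn := by
  by_contra hcon
  push_neg at hcon
  -- hcon : ∀ x ∈ Gn, x M ≠ 0 → ∃ j < N, x - f j ∈ Gn
  set P : ZInf → Prop := fun x => x ∈ Gn ∧ x M ≠ 0 with hP
  have hstep : ∀ x : {x // P x}, ∃ j, j < N ∧ (x : ZInf) - f j ∈ Gn := by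
    rintro ⟨x, hx, hxM⟩
    obtain ⟨j, hj, hmem⟩ := hcon x hx hxM
    exact ⟨j, hj, hmem⟩
  have hJlt : ∀ x : {x // P x}, (hstep x).choose < N := fun x => (hstep x).choose_spec.1
  have hJmem : ∀ x : {x // P x}, (x : ZInf) - f ((hstep x).choose) ∈ Gn :=
    fun x => (hstep x).choose_spec.2
  set J : {x // P x} → ℕ := fun x => (hstep x).choose with hJ
  have hφP : ∀ x : {x // P x}, P ((x : ZInf) - f (J x)) := by
    intro x
    refine ⟨hJmem x, ?_⟩
    rw [Finsupp.sub_apply, hM _ (hJlt x), sub_zero]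
    exact x.2.2
  set φ : {x // P x} → {x // P x} := fun x => ⟨(x : ZInf) - f (J x), hφP x⟩ with hφ
  set g : ℕ → {x // P x} := fun k => φ^[k] ⟨x₀, hx₀, hx₀M⟩ with hg
  have htel : ∀ k, (g k : ZInf) = x₀ - ∑ l ∈ Finset.range k, f (J (g l)) := by
    intro k
    induction k with
    | zero => simp [hg]
    | succ k ih =>
      have : g (k+1) = φ (g k) := Function.iterate_succ_apply' φ k _
      rw [this]
      show (g k : ZInf) - f (J (g k)) = _
      rw [ih, Finset.sum_range_succ]
      abel
  have hfin : Finite {x // P x} := by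
    have hsub : {x | P x} ⊆ ↑Gn := fun x hx => hx.1
    exact (Gn.finite_toSet.subset hsub).to_subtype
  obtain ⟨a, b, hne, heq⟩ := Finite.exists_ne_map_eq_of_infinite g
  wlog hab : a < b generalizing a b
  · exact this b a hne.symm heq.symm (by omega)
  have hsums : ∑ l ∈ Finset.range a, f (J (g l)) = ∑ l ∈ Finset.range b, f (J (g l)) := by
    have h1 := htel a
    have h2 := htel b
    rw [heq] at h1
    rw [h1] at h2
    exact sub_right_injective h2
  have hsum0 : ∑ l ∈ Finset.Ico a b, f (J (g l)) = 0 := by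
    rw [Finset.sum_Ico_eq_sub _ hab.le, ← hsums, sub_self]
  -- the maximal index appearing
  set K' : Finset ℕ := (Finset.Ico a b).image (fun l => J (g l)) with hK'
  have hK'ne : K'.Nonempty := by
    refine ⟨J (g a), Finset.mem_image.mpr ⟨a, ?_, rfl⟩⟩
    exact Finset.mem_Ico.mpr ⟨le_refl a, hab⟩
  set js : ℕ := K'.max' hK'ne with hjs
  have hjsN : js < N := by
    obtain ⟨l, _, hl⟩ := Finset.mem_image.mp (K'.max'_mem hK'ne)
    rw [hjs, ← hl]
    exact hJlt _
  have hval := congrArg (fun v : ZInf => v (m js)) hsum0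
  simp only [Finsupp.coe_zero, Pi.zero_apply] at hval
  rw [Finsupp.finset_sum_apply] at hval
  rw [← Finset.sum_filter_add_sum_filter_not (Finset.Ico a b) (fun l => J (g l) = js)] at hval
  have hrest : ∑ l ∈ (Finset.Ico a b).filter (fun l => ¬ J (g l) = js), f (J (g l)) (m js) = 0 := by
    apply Finset.sum_eq_zero
    intro l hl
    obtain ⟨hl1, hl2⟩ := Finset.mem_filter.mp hl
    have hmem : J (g l) ∈ K' := Finset.mem_image.mpr ⟨l, hl1, rfl⟩
    have hle : J (g l) ≤ js := Finset.le_max' _ _ hmem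
    exact h0 js hjsN _ (lt_of_le_of_ne hle hl2)
  have hmain : ∑ l ∈ (Finset.Ico a b).filter (fun l => J (g l) = js), f (J (g l)) (m js)
      = ((Finset.Ico a b).filter (fun l => J (g l) = js)).card • (f js (m js)) := by
    rw [← Finset.sum_const]
    apply Finset.sum_congr rfl
    intro l hl
    rw [(Finset.mem_filter.mp hl).2]
  have hcardpos : 0 < ((Finset.Ico a b).filter (fun l => J (g l) = js)).card := by
    obtain ⟨l, hl1, hl2⟩ := Finset.mem_image.mp (K'.max'_mem hK'ne)
    exact Finset.card_pos.mpr ⟨l, Finset.mem_filter.mpr ⟨hl1, hl2⟩⟩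
  rw [hmain, hrest, add_zero] at hval
  have hfjs := hfm js hjsN
  rcases Nat.exists_eq_succ_of_ne_zero hcardpos.ne' with ⟨c, hc⟩
  rw [hc] at hval
  simp only [nsmul_eq_mul] at hval
  have : ((c : ℤ) + 1) * f js (m js) ≠ 0 := by
    apply mul_ne_zero _ hfjs
    positivity
  rw [Nat.cast_succ] at hval
  exact this hval

/-- The key construction: arbitrarily long "satellite" configurations. -/
lemma zinf_key (F : ℕ → Finset ZInf)
    (hgen : AddSubgroup.closure (⋃ n, (F n : Set ZInf)) = ⊤) (N : ℕ) :
    ∃ (n : ℕ → ℕ) (f : ℕ → ZInf) (m : ℕ → ℕ),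
      (∀ i < N, f i ∈ F (n i)) ∧
      (∀ i < N, f i (m i) ≠ 0) ∧
      (∀ i < N, ∀ j < i, f j (m i) = 0) ∧
      (∀ i < N, ∀ j < i, ∀ g ∈ F (n j), g (m i) = 0) ∧
      (∀ i < N, ∀ j < N, i ≠ j → f i - f j ∉ F (n i)) := by
  induction N with
  | zero =>
    exact ⟨fun _ => 0, fun _ => 0, fun _ => 0, by omega, by omega, by omega, by omega, by omega⟩
  | succ N ih =>
    obtain ⟨n, f, m, h1, h2, h3, h4, h5⟩ := ih
    set B : ℕ := (Finset.range N).sup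
      (fun j => max ((f j).support.sup id) ((F (n j)).sup (fun g => g.support.sup id))) with hB
    set M : ℕ := B + 1 with hMdef
    have hfM : ∀ j < N, f j M = 0 := by
      intro j hj
      apply zinf_apply_eq_zero_of_lt
      have hb : max ((f j).support.sup id) ((F (n j)).sup (fun g => g.support.sup id)) ≤ B := by
        rw [hB]
        exact Finset.le_sup
          (f := fun j => max ((f j).support.sup id) ((F (n j)).sup (fun g => g.support.sup id)))
          (Finset.mem_range.mpr hj)
      have ha := Nat.le_max_left ((f j).support.sup id) ((F (n j)).sup (fun g => g.support.sup id))
      omega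
    have hFM : ∀ j < N, ∀ g ∈ F (n j), g M = 0 := by
      intro j hj g hg
      apply zinf_apply_eq_zero_of_lt
      have hg1 : g.support.sup id ≤ (F (n j)).sup (fun g => g.support.sup id) :=
        Finset.le_sup (f := fun g => g.support.sup id) hg
      have hb : max ((f j).support.sup id) ((F (n j)).sup (fun g => g.support.sup id)) ≤ B := by
        rw [hB]
        exact Finset.le_sup
          (f := fun j => max ((f j).support.sup id) ((F (n j)).sup (fun g => g.support.sup id)))
          (Finset.mem_range.mpr hj)
      have ha := Nat.le_max_right ((f j).support.sup id) ((F (n j)).sup (fun g => g.support.sup id))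
      omega
    obtain ⟨n₀, x₀, hx₀, hx₀M⟩ := zinf_eval_gen F hgen M
    obtain ⟨x, hxF, hxM, hxnot⟩ := zinf_descent (F n₀) N M f m h2 h3 hfM x₀ hx₀ hx₀M
    refine ⟨Function.update n N n₀, Function.update f N x, Function.update m N M,
      ?_, ?_, ?_, ?_, ?_⟩
    · intro i hi
      rcases Nat.lt_succ_iff_lt_or_eq.mp hi with hi' | rfl
      · rw [Function.update_of_ne hi'.ne, Function.update_of_ne hi'.ne]
        exact h1 i hi'
      · rw [Function.update_self, Function.update_self]
        exact hxF
    · intro i hi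
      rcases Nat.lt_succ_iff_lt_or_eq.mp hi with hi' | rfl
      · rw [Function.update_of_ne hi'.ne, Function.update_of_ne hi'.ne]
        exact h2 i hi'
      · rw [Function.update_self, Function.update_self]
        exact hxM
    · intro i hi j hj
      rcases Nat.lt_succ_iff_lt_or_eq.mp hi with hi' | rfl
      · rw [Function.update_of_ne hi'.ne, Function.update_of_ne (hj.trans hi').ne]
        exact h3 i hi' j hj
      · rw [Function.update_self, Function.update_of_ne hj.ne]
        exact hfM j hj
    · intro i hi j hj
      rcases Nat.lt_succ_iff_lt_or_eq.mp hi with hi' | rfl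
      · rw [Function.update_of_ne hi'.ne, Function.update_of_ne (hj.trans hi').ne]
        exact h4 i hi' j hj
      · rw [Function.update_self, Function.update_of_ne hj.ne]
        exact hFM j hj
    · intro i hi j hj hij
      rcases Nat.lt_succ_iff_lt_or_eq.mp hi with hi' | rfl
      · rcases Nat.lt_succ_iff_lt_or_eq.mp hj with hj' | rfl
        · rw [Function.update_of_ne hi'.ne, Function.update_of_ne hi'.ne,
            Function.update_of_ne hj'.ne]
          exact h5 i hi' j hj' hij
        · -- j = N : f i - x ∉ F (n i)
          rw [Function.update_of_ne hi'.ne, Function.update_of_ne hi'.ne,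
            Function.update_self]
          intro hmem
          have := hFM i hi' _ hmem
          rw [Finsupp.sub_apply, hfM i hi'] at this
          simp only [zero_sub, neg_eq_zero] at this
          exact hxM this
      · rcases Nat.lt_succ_iff_lt_or_eq.mp hj with hj' | rfl
        · rw [Function.update_self, Function.update_self, Function.update_of_ne hj'.ne]
          exact hxnot j hj'
        · exact absurd rfl hij

/-- If `{F n}` is a sequence of finite subsets of `ℤ^∞` whose union generates the
group, then `{F n}` is not Besicovitch. -/
theorem zinf_no_generating_besicovitch_sequence
    (F : ℕ → Finset ZInf)
    (hgen : AddSubgroup.closure (⋃ n, (F n : Set ZInf)) = ⊤) :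
    ¬ IsBesicovitch F := by
  rintro ⟨C, hC⟩
  set N : ℕ := C + 1 with hN
  obtain ⟨n, f, m, h1, h2, h3, _h4, h5⟩ := zinf_key F hgen N
  have hinj : ∀ i < N, ∀ j < N, f i = f j → i = j := by
    intro i hi j hj heq
    by_contra hne
    rcases Nat.lt_or_ge i j with h | h
    · have := h3 j hj i h
      rw [heq] at this
      exact h2 j hj this
    · have hij : j < i := lt_of_le_of_ne h (Ne.symm hne)
      have := h3 i hi j hij
      rw [← heq] at this
      exact h2 i hi this
  classical
  set ν : ZInf → ℕ := fun g => if h : ∃ i, i < N ∧ g = -f i then n h.choose else 0 with hν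
  have hνval : ∀ i < N, ν (-f i) = n i := by
    intro i hi
    have hex : ∃ i', i' < N ∧ -f i = -f i' := ⟨i, hi, rfl⟩
    rw [hν]
    simp only
    rw [dif_pos hex]
    have hspec := hex.choose_spec
    have : f hex.choose = f i := by
      have := hspec.2
      exact (neg_injective this).symm
    rw [hinj hex.choose hspec.1 i hi this]
  set A : Finset ZInf := (Finset.range N).image (fun i => -f i) with hA
  obtain ⟨A', hsub, hcov, hmul⟩ := hC A ν
  have hmemA' : ∀ i < N, -f i ∈ A' := by
    intro i hi
    obtain ⟨g, hgA', hgcov⟩ := hcov (-f i)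
      (Finset.mem_image.mpr ⟨i, Finset.mem_range.mpr hi, rfl⟩)
    obtain ⟨i', hi'N, hgi'⟩ : ∃ i', i' < N ∧ g = -f i' := by
      obtain ⟨i', hi'r, hgi'⟩ := Finset.mem_image.mp (hsub hgA')
      exact ⟨i', Finset.mem_range.mp hi'r, hgi'.symm⟩
    subst hgi'
    rw [hνval i' hi'N] at hgcov
    obtain ⟨s, hs, hseq⟩ := Finset.mem_image.mp hgcov
    have hs' : f i' - f i ∈ F (n i') := by
      have : s = f i' - f i := by
        have := hseq
        -- s + -f i' = -f i
        linear_combination (norm := abel) this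
      rwa [this] at hs
    by_cases hii : i' = i
    · subst hii
      exact hgA'
    · exact absurd hs' (h5 i' hi'N i hi hii)
  have hAsubA' : A ⊆ A' := by
    intro a ha
    obtain ⟨i, hir, rfl⟩ := Finset.mem_image.mp ha
    exact hmemA' i (Finset.mem_range.mp hir)
  have hA'eq : A' = A := Finset.Subset.antisymm hsub hAsubA'
  have hfilter : A'.filter (fun g => (0:ZInf) ∈ (F (ν g)).image (· + g)) = A' := by
    apply Finset.filter_true_of_mem
    intro g hg
    obtain ⟨i, hir, rfl⟩ := Finset.mem_image.mp (hsub hg)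
    have hi : i < N := Finset.mem_range.mp hir
    rw [hνval i hi]
    exact Finset.mem_image.mpr ⟨f i, h1 i hi, by simp⟩
  have hcard : A.card = N := by
    rw [hA]
    rw [Finset.card_image_of_injOn, Finset.card_range]
    intro i hi j hj heq
    exact hinj i (Finset.mem_range.mp hi) j (Finset.mem_range.mp hj) (neg_injective heq)
  have := hmul 0
  rw [hfilter, hA'eq, hcard] at this
  omega
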